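/- Assume E(|u|²) < ∞ μ-a.e., let v = E(u), S = {x : E(|u|²)(x) > 0}, and suppose ū·v = E(|u|²) μ-a.e. on S. Define T₁ on D(T₁) = {f ∈ D(EM_u) : E(|u|²)·(EM_u f) ∈ L²(μ)} by T₁ f = E(|u|²)·(EM_u f), and T₂ on D(T₂) = {f ∈ D(EM_u) : ū·v·(EM_u f) ∈ L²(μ)} by T₂ f = ū·v·(EM_u f). Then D(T₁) = D(T₂), this common domain is dense in L²(μ), and T₁ f = T₂ f μ-a.e. for every f ∈ D(T₁). (T₁ and T₂ represent EM_u|EM_u|² and |EM_u|²EM_u, so EM_u is quasinormal.) -/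

import Mathlib

open MeasureTheory Filter ENNReal NNReal
open Topology

noncomputable section

variable {X : Type*}

/-- A set `A` in the sub-σ-algebra `m` is *admissible* for the weight `u` if
`μ A + ∫_A |u|² dμ < ∞`. -/
def Admissible (m : MeasurableSpace X) [m0 : MeasurableSpace X] (μ : Measure X)
    (u : X → ℂ) (A : Set X) : Prop :=
  MeasurableSet[m] A ∧ μ A + ∫⁻ x in A, (‖u x‖₊ : ℝ≥0∞) ^ 2 ∂μ < ⊤

/-- `gf` is a version of `E(u·f)`, i.e. `gf` is an `m`-measurable function in `L²(μ)` with
`∫_A u·f dμ = ∫_A gf dμ` for every admissible `A`.  `f ∈ D(EM_u)` iff `f ∈ L²(μ)` and such a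
`gf` exists. -/
def IsWCE (m : MeasurableSpace X) [m0 : MeasurableSpace X] (μ : Measure X)
    (u f gf : X → ℂ) : Prop :=
  StronglyMeasurable[m] gf ∧ MemLp gf 2 μ ∧
    ∀ A : Set X, Admissible m μ u A → ∫ x in A, u x * f x ∂μ = ∫ x in A, gf x ∂μ

/-- If `w ∈ L¹(μ) ∩ L²(μ)`, then its conditional expectation is in `L²(μ)`. -/
lemma memℒp_two_condexp {m m0 : MeasurableSpace X} (hm : m ≤ m0)
    {μ : Measure X} [SigmaFinite (μ.trim hm)] {w : X → ℂ}
    (hw1 : Integrable w μ) (hw2 : MemLp w 2 μ) : MemLp (μ[w|m]) 2 μ := by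
  have heq : ((condExpL2 ℂ ℂ hm (hw2.toLp w) : Lp ℂ 2 μ) : X → ℂ) =ᵐ[μ] μ[w|m] := by
    refine ae_eq_condExp_of_forall_setIntegral_eq hm hw1
      (fun s _ hμs => integrableOn_condExpL2_of_measure_ne_top hm hμs.ne _)
      (fun s hs hμs => ?_) (lpMeas.aestronglyMeasurable _)
    rw [integral_condExpL2_eq hm (hw2.toLp w) hs hμs.ne]
    exact setIntegral_congr_ae (hm s hs) (hw2.coeFn_toLp.mono fun x hx _ => hx)
  exact (Lp.memLp _).ae_eq heq

/-- With `E(|u|²) < ∞` a.e., `v = E(u)`, `S = {E(|u|²) > 0}` and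
`ū·v = E(|u|²)` a.e. on `S`, the operators `T₁ f = E(|u|²)·(EM_u f)` and
`T₂ f = ū·v·(EM_u f)` (with the natural domains inside `D(EM_u)`) have equal dense domains
and agree a.e. there (so `EM_u` is quasinormal). -/
theorem stmt14 (m : MeasurableSpace X) [m0 : MeasurableSpace X] (hm : m ≤ m0)
    (μ : Measure X) [SigmaFinite μ] [SigmaFinite (μ.trim hm)]
    (u : X → ℂ) (hu : Measurable u)
    (g : X → ℝ≥0∞) (hgm : Measurable[m] g)
    (hg : ∀ A : Set X, MeasurableSet[m] A →
      ∫⁻ x in A, (‖u x‖₊ : ℝ≥0∞) ^ 2 ∂μ = ∫⁻ x in A, g x ∂μ)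
    (hgfin : ∀ᵐ x ∂μ, g x < ⊤)
    (v : X → ℂ) (hvm : StronglyMeasurable[m] v)
    (hv : ∀ A : Set X, Admissible m μ u A → ∫ x in A, u x ∂μ = ∫ x in A, v x ∂μ)
    (hqn : ∀ᵐ x ∂μ, g x ≠ 0 → (starRingEnd ℂ) (u x) * v x = ((g x).toReal : ℂ)) :
    (∀ f : X → ℂ, MemLp f 2 μ →
      ((∃ gf : X → ℂ, IsWCE m μ u f gf ∧
          MemLp (fun x => ((g x).toReal : ℂ) * gf x) 2 μ) ↔
        (∃ gf : X → ℂ, IsWCE m μ u f gf ∧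
          MemLp (fun x => (starRingEnd ℂ) (u x) * v x * gf x) 2 μ))) ∧
    Dense {f : Lp ℂ 2 μ | ∃ gf : X → ℂ, IsWCE m μ u (f : X → ℂ) gf ∧
      MemLp (fun x => ((g x).toReal : ℂ) * gf x) 2 μ} ∧
    ∀ f gf : X → ℂ, MemLp f 2 μ → IsWCE m μ u f gf →
      MemLp (fun x => ((g x).toReal : ℂ) * gf x) 2 μ →
      (fun x => ((g x).toReal : ℂ) * gf x) =ᵐ[μ]
        fun x => (starRingEnd ℂ) (u x) * v x * gf x := by
  -- the set where g vanishes
  have hZm : MeasurableSet[m] {x | g x = 0} := hgm (measurableSet_singleton 0)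
  have hZ0 : ∫⁻ x in {x | g x = 0}, (‖u x‖₊ : ℝ≥0∞) ^ 2 ∂μ = 0 := by
    rw [hg _ hZm, setLIntegral_congr_fun_ae (hm _ hZm)
      (ae_of_all μ fun x (hx : g x = 0) => hx)]
    simp
  have hu0 : ∀ᵐ x ∂μ, g x = 0 → u x = 0 := by
    have h := (lintegral_eq_zero_iff (hu.nnnorm.coe_nnreal_ennreal.pow_const 2)).mp hZ0
    rw [EventuallyEq, ae_restrict_iff' (hm _ hZm)] at h
    filter_upwards [h] with x hx hgx
    have := hx hgx
    simpa using this
  have hcoef : (fun x => (((g x).toReal : ℝ) : ℂ)) =ᵐ[μ]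
      fun x => (starRingEnd ℂ) (u x) * v x := by
    filter_upwards [hqn, hu0] with x h1 h2
    by_cases hgx : g x = 0
    · simp [hgx, h2 hgx]
    · exact (h1 hgx).symm
  have part3 : ∀ gf : X → ℂ,
      (fun x => ((g x).toReal : ℂ) * gf x) =ᵐ[μ]
        fun x => (starRingEnd ℂ) (u x) * v x * gf x := by
    intro gf
    filter_upwards [hcoef] with x hx
    rw [hx]
  refine ⟨?_, ?_, fun f gf _ _ _ => part3 gf⟩
  · intro f _
    constructor
    · rintro ⟨gf, h1, h2⟩
      exact ⟨gf, h1, h2.ae_eq (part3 gf)⟩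
    · rintro ⟨gf, h1, h2⟩
      exact ⟨gf, h1, h2.ae_eq (part3 gf).symm⟩
  · -- density
    rw [dense_iff_closure_eq, Set.eq_univ_iff_forall]
    intro f
    have hf' : MemLp (⇑f) 2 μ := Lp.memLp f
    set A : ℕ → Set X := spanningSets (μ.trim hm) with hA
    have hAm : ∀ n, MeasurableSet[m] (A n) := fun n =>
      measurableSet_spanningSets (μ.trim hm) n
    set G : ℕ → Set X := fun n => A n ∩ {x | g x ≤ (n : ℝ≥0∞)} with hG
    have hGm : ∀ n, MeasurableSet[m] (G n) := fun n =>
      (hAm n).inter (hgm measurableSet_Iic)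
    have hGfin : ∀ n, μ (G n) < ⊤ := fun n => by
      refine (measure_mono Set.inter_subset_left).trans_lt ?_
      rw [← trim_measurableSet_eq hm (hAm n)]
      exact measure_spanningSets_lt_top (μ.trim hm) n
    set F : ℕ → Set X := fun n => G n ∩ {x | ‖u x‖ ≤ (n : ℝ)} with hF
    have hFm : ∀ n, MeasurableSet (F n) := fun n =>
      (hm _ (hGm n)).inter (measurableSet_le hu.norm measurable_const)
    have hFG : ∀ n, F n ⊆ G n := fun n => Set.inter_subset_left
    have hmem : ∀ n, MemLp ((F n).indicator ⇑f) 2 μ := fun n => hf'.indicator (hFm n)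
    -- each truncation is in the set
    have hin : ∀ n, ((hmem n).toLp ((F n).indicator ⇑f)) ∈
        {f : Lp ℂ 2 μ | ∃ gf : X → ℂ, IsWCE m μ u (f : X → ℂ) gf ∧
          MemLp (fun x => ((g x).toReal : ℂ) * gf x) 2 μ} := by
      intro n
      set w : X → ℂ := fun x => u x * (F n).indicator (⇑f) x with hw
      have hwmeas : AEStronglyMeasurable w μ :=
        hu.aestronglyMeasurable.mul
          (((Lp.stronglyMeasurable f).indicator (hFm n)).aestronglyMeasurable)
      have hw2 : MemLp w 2 μ := by
        refine (hmem n).of_le_mul (c := (n : ℝ)) hwmeas (ae_of_all _ fun x => ?_)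
        by_cases hx : x ∈ F n
        · simp only [hw, norm_mul]
          exact mul_le_mul_of_nonneg_right hx.2 (norm_nonneg _)
        · simp [hw, Set.indicator_of_notMem hx, mul_nonneg (Nat.cast_nonneg n) (norm_nonneg _)]
      have hwind : w = (F n).indicator (fun x => u x * f x) := by
        funext x
        by_cases hx : x ∈ F n <;>
          simp [hw, Set.indicator_of_mem, Set.indicator_of_notMem, hx]
      have hw1 : Integrable w μ := by
        rw [hwind, integrable_indicator_iff (hFm n)]
        haveI : IsFiniteMeasure (μ.restrict (F n)) := ⟨by
          rw [Measure.restrict_apply_univ]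
          exact (measure_mono (hFG n)).trans_lt (hGfin n)⟩
        refine MemLp.integrable one_le_two ?_
        refine MemLp.of_le_mul (c := (n : ℝ)) (hf'.restrict (F n))
          ((hu.aestronglyMeasurable.mul (Lp.aestronglyMeasurable f)).restrict) ?_
        rw [ae_restrict_iff' (hFm n)]
        refine ae_of_all _ fun x hx => ?_
        rw [norm_mul]
        exact mul_le_mul_of_nonneg_right hx.2 (norm_nonneg _)
      have hgf1 : StronglyMeasurable[m] (μ[w|m]) := stronglyMeasurable_condExp
      have hgf2 : MemLp (μ[w|m]) 2 μ := memℒp_two_condexp hm hw1 hw2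
      have hint : ∀ B : Set X, Admissible m μ u B →
          ∫ x in B, u x * ((hmem n).toLp ((F n).indicator ⇑f) : X → ℂ) x ∂μ
            = ∫ x in B, (μ[w|m]) x ∂μ := by
        intro B hB
        have hstep : ∫ x in B, u x * ((hmem n).toLp ((F n).indicator ⇑f) : X → ℂ) x ∂μ
            = ∫ x in B, w x ∂μ := by
          refine setIntegral_congr_ae (hm _ hB.1) ?_
          filter_upwards [(hmem n).coeFn_toLp] with x hx _
          simp only [hw]
          rw [hx]
        rw [hstep]
        exact (setIntegral_condExp hm hw1 hB.1).symm
      have hsupp : μ[w|m] =ᵐ[μ] (G n).indicator (μ[w|m]) := by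
        have hGind : w = (G n).indicator w := by
          funext x
          by_cases hx : x ∈ G n
          · rw [Set.indicator_of_mem hx]
          · rw [Set.indicator_of_notMem hx]
            have hxF : x ∉ F n := fun h => hx (hFG n h)
            simp [hw, Set.indicator_of_notMem hxF]
        calc μ[w|m] = μ[(G n).indicator w|m] := by rw [← hGind]
          _ =ᵐ[μ] (G n).indicator (μ[w|m]) := condExp_indicator hw1 (hGm n)
      have hprodmeas : AEStronglyMeasurable (fun x => ((g x).toReal : ℂ) * (μ[w|m]) x) μ := by
        refine AEStronglyMeasurable.mul ?_ (hgf1.mono hm).aestronglyMeasurable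
        exact (Complex.measurable_ofReal.comp
          ((hgm.mono hm le_rfl).ennreal_toReal)).aestronglyMeasurable
      have hg2' : MemLp (fun x => ((g x).toReal : ℂ) * (μ[w|m]) x) 2 μ := by
        refine hgf2.of_le_mul (c := (n : ℝ)) hprodmeas ?_
        filter_upwards [hsupp] with x hx
        by_cases hxG : x ∈ G n
        · have hle : (g x).toReal ≤ (n : ℝ) := by
            have h1 : g x ≤ (n : ℝ≥0∞) := hxG.2
            calc (g x).toReal ≤ ((n : ℝ≥0∞)).toReal :=
                  ENNReal.toReal_mono (by simp) h1
              _ = (n : ℝ) := by simp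
          rw [norm_mul]
          refine mul_le_mul_of_nonneg_right ?_ (norm_nonneg _)
          rw [Complex.norm_real, Real.norm_eq_abs, abs_of_nonneg ENNReal.toReal_nonneg]
          exact hle
        · rw [hx, Set.indicator_of_notMem hxG]
          simp [mul_nonneg (Nat.cast_nonneg n) (norm_nonneg _)]
      exact ⟨μ[w|m], ⟨hgf1, hgf2, hint⟩, hg2'⟩
    -- the truncations converge to f in L²
    have hform : ∀ h : X → ℂ,
        eLpNorm h 2 μ = (∫⁻ x, (‖h x‖₊ : ℝ≥0∞) ^ (2 : ℝ) ∂μ) ^ (1 / (2 : ℝ)) := by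
      intro h
      rw [eLpNorm_eq_lintegral_rpow_enorm_toReal two_ne_zero ENNReal.ofNat_ne_top]
      norm_num
      rfl
    have key : Tendsto (fun n => ∫⁻ x, (‖(F n)ᶜ.indicator (⇑f) x‖₊ : ℝ≥0∞) ^ (2 : ℝ) ∂μ)
        atTop (𝓝 0) := by
      have h0 : (0 : ℝ≥0∞) = ∫⁻ (_ : X), 0 ∂μ := by simp
      rw [h0]
      refine tendsto_lintegral_of_dominated_convergence
        (fun x => (‖f x‖₊ : ℝ≥0∞) ^ (2 : ℝ)) ?_ ?_ ?_ ?_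
      · intro n
        exact ((Lp.stronglyMeasurable f).measurable.indicator
          (hFm n).compl).nnnorm.coe_nnreal_ennreal.pow_const _
      · intro n
        refine ae_of_all _ fun x => ?_
        refine ENNReal.rpow_le_rpow ?_ (by norm_num)
        refine ENNReal.coe_le_coe.mpr ?_
        rw [nnnorm_indicator_eq_indicator_nnnorm]
        exact Set.indicator_le_self _ _ x
      · exact (lintegral_rpow_enorm_lt_top_of_eLpNorm_lt_top two_ne_zero ENNReal.ofNat_ne_top hf'.2).ne
      · filter_upwards [hgfin] with x hgx
        obtain ⟨n1, hn1⟩ : ∃ k : ℕ, x ∈ A k := by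
          have hx : x ∈ ⋃ k, A k := by
            rw [hA, iUnion_spanningSets (μ.trim hm)]; trivial
          exact Set.mem_iUnion.mp hx
        obtain ⟨n2, hn2⟩ := ENNReal.exists_nat_gt hgx.ne
        obtain ⟨n3, hn3⟩ := exists_nat_ge ‖u x‖
        refine tendsto_const_nhds.congr' ?_
        rw [EventuallyEq, eventually_atTop]
        refine ⟨max (max n1 n2) n3, fun k hk => ?_⟩
        have hk1 : n1 ≤ k := le_trans (le_trans (le_max_left _ _) (le_max_left _ _)) hk
        have hk2 : n2 ≤ k := le_trans (le_trans (le_max_right _ _) (le_max_left _ _)) hk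
        have hk3 : n3 ≤ k := le_trans (le_max_right _ _) hk
        have hxF : x ∈ F k := by
          refine ⟨⟨monotone_spanningSets (μ.trim hm) hk1 hn1, ?_⟩, ?_⟩
          · exact le_trans hn2.le (by exact_mod_cast hk2)
          · exact le_trans hn3 (by exact_mod_cast hk3)
        have : x ∉ (F k)ᶜ := fun h => h hxF
        rw [Set.indicator_of_notMem this]
        simp
    have htend0 : Tendsto (fun n =>
        (∫⁻ x, (‖(F n)ᶜ.indicator (⇑f) x‖₊ : ℝ≥0∞) ^ (2 : ℝ) ∂μ) ^ (1 / (2 : ℝ)))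
        atTop (𝓝 0) := by
      have h00 : (0 : ℝ≥0∞) = (0 : ℝ≥0∞) ^ (1 / (2 : ℝ)) := by
        rw [ENNReal.zero_rpow_of_pos]; norm_num
      rw [h00]
      exact (ENNReal.continuous_rpow_const.tendsto 0).comp key
    have htend : Tendsto (fun n => (hmem n).toLp ((F n).indicator ⇑f)) atTop (𝓝 f) := by
      rw [Lp.tendsto_Lp_iff_tendsto_eLpNorm']
      refine Tendsto.congr (fun n => ?_) htend0
      have h1 : (⇑((hmem n).toLp ((F n).indicator ⇑f)) - ⇑f : X → ℂ)
          =ᵐ[μ] fun x => (F n).indicator (⇑f) x - f x := by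
        filter_upwards [(hmem n).coeFn_toLp] with x hx
        simp [hx]
      have h2 : (fun x => (F n).indicator (⇑f) x - f x) = -((F n)ᶜ.indicator ⇑f) := by
        funext x
        by_cases hx : x ∈ F n <;>
          simp [Set.indicator_of_mem, Set.indicator_of_notMem, hx]
      rw [eLpNorm_congr_ae h1, h2, eLpNorm_neg, hform]
    exact mem_closure_of_tendsto htend (Eventually.of_forall hin)
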